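/- Under the setup of Theorem on E-optimality, the sharper bound ε(a,b) ≤ max over multisets A ⊆ B with |A|=a, |B|=b and u ∈ E of σ_max(H)^2 · λ_max[Y(B) - Y(A)] / λ_min[Y(A) + M_u]^2 holds, where Y(D) = R_θ^{-1} + ∑_{e∈D} M_e. -/

import Mathlib

open Matrix

/-- Maximum eigenvalue of a real symmetric matrix (0 if not Hermitian). -/
noncomputable def lmax {n : ℕ} (A : Matrix (Fin n) (Fin n) ℝ) : ℝ :=
  if h : A.IsHermitian then ⨆ i, h.eigenvalues i else 0

/-- Minimum eigenvalue of a real symmetric matrix (0 if not Hermitian). -/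
noncomputable def lmin {n : ℕ} (A : Matrix (Fin n) (Fin n) ℝ) : ℝ :=
  if h : A.IsHermitian then ⨅ i, h.eigenvalues i else 0

lemma quad_decomp {n : ℕ} {A : Matrix (Fin n) (Fin n) ℝ} (hA : A.IsHermitian) (x : Fin n → ℝ) :
    ∃ y : Fin n → ℝ, x ⬝ᵥ A *ᵥ x = ∑ i, hA.eigenvalues i * (y i)^2 ∧ x ⬝ᵥ x = ∑ i, (y i)^2 := by
  set U : Matrix (Fin n) (Fin n) ℝ := (hA.eigenvectorUnitary : Matrix (Fin n) (Fin n) ℝ) with hU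
  have hsU : star U = Uᵀ := by
    ext i j; simp [star_apply]
  set y : Fin n → ℝ := (star U) *ᵥ x with hy
  have key : ∀ z : Fin n → ℝ, x ⬝ᵥ (U *ᵥ z) = y ⬝ᵥ z := by
    intro z
    rw [dotProduct_mulVec, hy, hsU, mulVec_transpose]
  have hUU : U * star U = 1 := (Matrix.mem_unitaryGroup_iff).mp (hA.eigenvectorUnitary).2
  refine ⟨y, ?_, ?_⟩
  · conv_lhs => rw [hA.spectral_theorem, Unitary.conjStarAlgAut_apply]
    rw [← Matrix.mulVec_mulVec, ← Matrix.mulVec_mulVec, key]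
    simp only [dotProduct, Matrix.mulVec_diagonal, Function.comp, RCLike.ofReal_real_eq_id, id_eq]
    exact Finset.sum_congr rfl fun i _ => by ring
  · have : x = U *ᵥ y := by
      rw [hy, Matrix.mulVec_mulVec, hUU, Matrix.one_mulVec]
    calc x ⬝ᵥ x = x ⬝ᵥ (U *ᵥ y) := by rw [← this]
    _ = y ⬝ᵥ y := key y
    _ = ∑ i, (y i)^2 := by simp [dotProduct, pow_two]

lemma quad_le_lmax {n : ℕ} {A : Matrix (Fin n) (Fin n) ℝ} (hA : A.IsHermitian) (x : Fin n → ℝ) :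
    x ⬝ᵥ A *ᵥ x ≤ lmax A * (x ⬝ᵥ x) := by
  obtain ⟨y, h1, h2⟩ := quad_decomp hA x
  rw [h1, h2, lmax, dif_pos hA, Finset.mul_sum]
  refine Finset.sum_le_sum fun i _ => ?_
  exact mul_le_mul_of_nonneg_right
    (le_ciSup (Set.Finite.bddAbove (Set.finite_range _)) i) (sq_nonneg _)

lemma lmin_le_quad {n : ℕ} {A : Matrix (Fin n) (Fin n) ℝ} (hA : A.IsHermitian) (x : Fin n → ℝ) :
    lmin A * (x ⬝ᵥ x) ≤ x ⬝ᵥ A *ᵥ x := by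
  obtain ⟨y, h1, h2⟩ := quad_decomp hA x
  rw [h1, h2, lmin, dif_pos hA, Finset.mul_sum]
  refine Finset.sum_le_sum fun i _ => ?_
  exact mul_le_mul_of_nonneg_right
    (ciInf_le (Set.Finite.bddBelow (Set.finite_range _)) i) (sq_nonneg _)

lemma exists_unit_lmax {n : ℕ} (hn : 0 < n) {A : Matrix (Fin n) (Fin n) ℝ}
    (hA : A.IsHermitian) : ∃ x : Fin n → ℝ, x ⬝ᵥ x = 1 ∧ x ⬝ᵥ A *ᵥ x = lmax A := by
  haveI : Nonempty (Fin n) := Fin.pos_iff_nonempty.mp hn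
  obtain ⟨i0, hi0⟩ := Finite.exists_max hA.eigenvalues
  set x : Fin n → ℝ := ⇑(hA.eigenvectorBasis i0) with hx
  have hAx : A *ᵥ x = hA.eigenvalues i0 • x := hA.mulVec_eigenvectorBasis i0
  have hxx : x ⬝ᵥ x = 1 := by
    have h1 : ‖hA.eigenvectorBasis i0‖ = 1 := (hA.eigenvectorBasis).orthonormal.1 i0
    rw [EuclideanSpace.norm_eq] at h1
    have h2 : ∑ i, ‖hA.eigenvectorBasis i0 i‖ ^ 2 = 1 := by
      have := congrArg (· ^ 2) h1
      simpa [Real.sq_sqrt (Finset.sum_nonneg fun i _ => sq_nonneg _)] using this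
    simpa [dotProduct, Real.norm_eq_abs, sq_abs, pow_two] using h2
  refine ⟨x, hxx, ?_⟩
  have hlm : lmax A = hA.eigenvalues i0 := by
    rw [lmax, dif_pos hA]
    exact le_antisymm (ciSup_le fun i => hi0 i)
      (le_ciSup (Set.Finite.bddAbove (Set.finite_range _)) i0)
  rw [hAx, dotProduct_smul, hxx, hlm, smul_eq_mul, mul_one]

lemma lmax_nonneg {n : ℕ} {A : Matrix (Fin n) (Fin n) ℝ} (hA : A.PosSemidef) : 0 ≤ lmax A := by
  rw [lmax, dif_pos hA.isHermitian]
  cases n with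
  | zero => rw [Real.iSup_of_isEmpty]
  | succ k =>
    exact le_trans (hA.eigenvalues_nonneg 0)
      (le_ciSup (Set.Finite.bddAbove (Set.finite_range _)) 0)

lemma lmin_pos {n : ℕ} (hn : 0 < n) {A : Matrix (Fin n) (Fin n) ℝ} (hA : A.PosDef) :
    0 < lmin A := by
  haveI : Nonempty (Fin n) := Fin.pos_iff_nonempty.mp hn
  rw [lmin, dif_pos hA.isHermitian]
  obtain ⟨i0, hi0⟩ := Finite.exists_min hA.isHermitian.eigenvalues
  exact lt_of_lt_of_le (hA.eigenvalues_pos i0) (le_ciInf hi0)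

lemma lmax_sub_le {n : ℕ} (hn : 0 < n) {P Q : Matrix (Fin n) (Fin n) ℝ}
    (hP : P.IsHermitian) (hQ : Q.IsHermitian) : lmax P - lmax Q ≤ lmax (P - Q) := by
  obtain ⟨x, hx1, hx2⟩ := exists_unit_lmax hn hP
  have h1 : x ⬝ᵥ (P - Q) *ᵥ x ≤ lmax (P - Q) * 1 := by
    rw [← hx1]; exact quad_le_lmax (hP.sub hQ) x
  have h2 : x ⬝ᵥ Q *ᵥ x ≤ lmax Q * 1 := by
    rw [← hx1]; exact quad_le_lmax hQ x
  rw [Matrix.sub_mulVec, dotProduct_sub] at h1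
  linarith

lemma lmax_mono {n : ℕ} {P Q : Matrix (Fin n) (Fin n) ℝ}
    (hP : P.IsHermitian) (hQ : Q.IsHermitian)
    (h : ∀ x : Fin n → ℝ, x ⬝ᵥ P *ᵥ x ≤ x ⬝ᵥ Q *ᵥ x) : lmax P ≤ lmax Q := by
  cases n with
  | zero => rw [lmax, dif_pos hP, lmax, dif_pos hQ, Real.iSup_of_isEmpty, Real.iSup_of_isEmpty]
  | succ k =>
    obtain ⟨x, hx1, hx2⟩ := exists_unit_lmax (Nat.succ_pos k) hP
    have := quad_le_lmax hQ x
    rw [hx1, mul_one] at this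
    linarith [h x]

lemma lmax_le_of_quad {n : ℕ} (hn : 0 < n) {P : Matrix (Fin n) (Fin n) ℝ}
    (hP : P.IsHermitian) {c : ℝ} (h : ∀ x : Fin n → ℝ, x ⬝ᵥ x = 1 → x ⬝ᵥ P *ᵥ x ≤ c) :
    lmax P ≤ c := by
  obtain ⟨x, hx1, hx2⟩ := exists_unit_lmax hn hP
  rw [← hx2]; exact h x hx1

lemma transpose_eq_self {n : ℕ} {A : Matrix (Fin n) (Fin n) ℝ} (hA : A.IsHermitian) :
    Aᵀ = A := by
  ext i j
  have h := congrFun (congrFun hA.eq i) j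
  simp only [conjTranspose_apply, star_trivial] at h
  simpa using h

lemma psd_quad_nonneg {n : ℕ} {A : Matrix (Fin n) (Fin n) ℝ} (hA : A.PosSemidef)
    (x : Fin n → ℝ) : 0 ≤ x ⬝ᵥ A *ᵥ x := by
  simpa using hA.dotProduct_mulVec_nonneg x

lemma quad_lower {n : ℕ} {A : Matrix (Fin n) (Fin n) ℝ} (hA : A.PosDef)
    (y w : Fin n → ℝ) : 2 * (w ⬝ᵥ y) - w ⬝ᵥ A *ᵥ w ≤ y ⬝ᵥ A⁻¹ *ᵥ y := by
  have hdet : IsUnit A.det := isUnit_iff_ne_zero.mpr hA.det_pos.ne'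
  have hAi : A * A⁻¹ = 1 := A.mul_nonsing_inv hdet
  set v : Fin n → ℝ := A⁻¹ *ᵥ y with hv
  have hAv : A *ᵥ v = y := by rw [hv, Matrix.mulVec_mulVec, hAi, Matrix.one_mulVec]
  have hz : 0 ≤ (w - v) ⬝ᵥ A *ᵥ (w - v) := psd_quad_nonneg hA.posSemidef _
  have hvAw : v ⬝ᵥ A *ᵥ w = w ⬝ᵥ y := by
    rw [dotProduct_mulVec, ← Matrix.mulVec_transpose, transpose_eq_self hA.isHermitian, hAv,
      dotProduct_comm]
  have hwAv : w ⬝ᵥ A *ᵥ v = w ⬝ᵥ y := by rw [hAv]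
  have hvAv : v ⬝ᵥ A *ᵥ v = y ⬝ᵥ A⁻¹ *ᵥ y := by rw [hAv, dotProduct_comm, hv]
  rw [Matrix.mulVec_sub, sub_dotProduct, dotProduct_sub, dotProduct_sub, hvAw, hwAv,
    hvAv] at hz
  linarith

lemma inv_antitone_quad {n : ℕ} {A D : Matrix (Fin n) (Fin n) ℝ} (hA : A.PosDef)
    (hD : D.PosSemidef) (y : Fin n → ℝ) :
    y ⬝ᵥ (A + D)⁻¹ *ᵥ y ≤ y ⬝ᵥ A⁻¹ *ᵥ y := by
  have hB : (A + D).PosDef := hA.add_posSemidef hD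
  have hdet : IsUnit (A + D).det := isUnit_iff_ne_zero.mpr hB.det_pos.ne'
  have hBi : (A + D) * (A + D)⁻¹ = 1 := (A + D).mul_nonsing_inv hdet
  set w : Fin n → ℝ := (A + D)⁻¹ *ᵥ y with hw
  have hBw : (A + D) *ᵥ w = y := by rw [hw, Matrix.mulVec_mulVec, hBi, Matrix.one_mulVec]
  have h1 := quad_lower hA y w
  have hwy : w ⬝ᵥ y = w ⬝ᵥ A *ᵥ w + w ⬝ᵥ D *ᵥ w := by
    rw [← hBw, Matrix.add_mulVec, dotProduct_add]
  have hyw : y ⬝ᵥ (A + D)⁻¹ *ᵥ y = w ⬝ᵥ y := by rw [← hw, dotProduct_comm]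
  have hDw : 0 ≤ w ⬝ᵥ D *ᵥ w := psd_quad_nonneg hD w
  linarith

lemma diff_quad_bound {n : ℕ} {A D : Matrix (Fin n) (Fin n) ℝ} (hA : A.PosDef)
    (hD : D.PosSemidef) (y : Fin n → ℝ) :
    y ⬝ᵥ A⁻¹ *ᵥ y - y ⬝ᵥ (A + D)⁻¹ *ᵥ y ≤ (A⁻¹ *ᵥ y) ⬝ᵥ D *ᵥ (A⁻¹ *ᵥ y) := by
  have hB : (A + D).PosDef := hA.add_posSemidef hD
  have hdet : IsUnit A.det := isUnit_iff_ne_zero.mpr hA.det_pos.ne'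
  have hAi : A * A⁻¹ = 1 := A.mul_nonsing_inv hdet
  set w : Fin n → ℝ := A⁻¹ *ᵥ y with hw
  have hAw : A *ᵥ w = y := by rw [hw, Matrix.mulVec_mulVec, hAi, Matrix.one_mulVec]
  have h1 := quad_lower hB y w
  have hwy : w ⬝ᵥ y = y ⬝ᵥ A⁻¹ *ᵥ y := by rw [dotProduct_comm, hw]
  have hwBw : w ⬝ᵥ (A + D) *ᵥ w = y ⬝ᵥ A⁻¹ *ᵥ y + w ⬝ᵥ D *ᵥ w := by
    rw [Matrix.add_mulVec, dotProduct_add, hAw, ← hwy]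
  linarith

lemma inv_norm_bound {n : ℕ} {A : Matrix (Fin n) (Fin n) ℝ} (hA : A.PosDef)
    (hc : 0 < lmin A) (y : Fin n → ℝ) :
    (A⁻¹ *ᵥ y) ⬝ᵥ (A⁻¹ *ᵥ y) ≤ (y ⬝ᵥ y) / (lmin A) ^ 2 := by
  have hdet : IsUnit A.det := isUnit_iff_ne_zero.mpr hA.det_pos.ne'
  have hAi : A * A⁻¹ = 1 := A.mul_nonsing_inv hdet
  set c : ℝ := lmin A with hcdef
  set u : Fin n → ℝ := A⁻¹ *ᵥ y with hu
  have hAu : A *ᵥ u = y := by rw [hu, Matrix.mulVec_mulVec, hAi, Matrix.one_mulVec]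
  have h1 : c * (u ⬝ᵥ u) ≤ u ⬝ᵥ A *ᵥ u := lmin_le_quad hA.isHermitian u
  have h2 : u ⬝ᵥ A *ᵥ u = u ⬝ᵥ y := by rw [hAu]
  have h3 : u ⬝ᵥ y ≤ c / 2 * (u ⬝ᵥ u) + (y ⬝ᵥ y) / (2 * c) := by
    have h2c : (0:ℝ) < 2 * c := by linarith
    have hstep : ∀ i ∈ Finset.univ, u i * y i ≤ c / 2 * (u i * u i) + y i * y i / (2 * c) := by
      intro i _
      have key : c / 2 * (u i * u i) + y i * y i / (2 * c) - u i * y i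
          = (c * u i - y i) ^ 2 / (2 * c) := by field_simp; ring
      have hd := div_nonneg (sq_nonneg (c * u i - y i)) h2c.le
      linarith [key ▸ hd]
    have := Finset.sum_le_sum hstep
    simp only [dotProduct, Finset.mul_sum, Finset.sum_div, Finset.sum_add_distrib] at this ⊢
    convert this using 2
  have huu : 0 ≤ u ⬝ᵥ u := by
    simp only [dotProduct]; exact Finset.sum_nonneg fun i _ => mul_self_nonneg _
  have hyy : 0 ≤ y ⬝ᵥ y := by
    simp only [dotProduct]; exact Finset.sum_nonneg fun i _ => mul_self_nonneg _
  have h4 : c / 2 * (u ⬝ᵥ u) ≤ (y ⬝ᵥ y) / (2 * c) := by linarith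
  have h5 := mul_le_mul_of_nonneg_left h4 hc.le
  have h6 : c * ((y ⬝ᵥ y) / (2 * c)) = (y ⬝ᵥ y) / 2 := by field_simp
  rw [le_div_iff₀ (by positivity)]
  nlinarith [h5, h6]

lemma conjT {m p : ℕ} (H : Matrix (Fin m) (Fin p) ℝ) : Hᴴ = Hᵀ := by
  ext i j; simp [conjTranspose_apply]

lemma herm_HXHT {m p : ℕ} (H : Matrix (Fin m) (Fin p) ℝ) {X : Matrix (Fin p) (Fin p) ℝ}
    (hX : X.IsHermitian) : (H * X * Hᵀ).IsHermitian := by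
  have := Matrix.isHermitian_mul_mul_conjTranspose H hX
  rwa [conjT] at this

lemma quad_HXHT {m p : ℕ} (H : Matrix (Fin m) (Fin p) ℝ) (X : Matrix (Fin p) (Fin p) ℝ)
    (x : Fin m → ℝ) :
    x ⬝ᵥ (H * X * Hᵀ) *ᵥ x = (Hᵀ *ᵥ x) ⬝ᵥ X *ᵥ (Hᵀ *ᵥ x) := by
  rw [← Matrix.mulVec_mulVec, ← Matrix.mulVec_mulVec, dotProduct_mulVec,
    ← Matrix.mulVec_transpose]

lemma sum_map_psd {E : Type*} {p : ℕ} (M : E → Matrix (Fin p) (Fin p) ℝ)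
    (hM : ∀ e, (M e).PosSemidef) (D : Multiset E) : ((D.map M).sum).PosSemidef := by
  induction D using Multiset.induction_on with
  | empty => simpa using Matrix.PosSemidef.zero
  | cons a s ih => rw [Multiset.map_cons, Multiset.sum_cons]; exact (hM a).add ih

lemma lmax_fin_zero (X : Matrix (Fin 0) (Fin 0) ℝ) : lmax X = 0 := by
  rw [lmax]; split
  · exact Real.iSup_of_isEmpty _
  · rfl

/-- Sharper bound on the supermodularity violation of the E-optimality objective:
for every A ⊆ B with |A| = a, |B| = b and every u,
`f(B) - f(B∪{u}) - f(A) + f(A∪{u}) ≤ σ_max(H)² λ_max[Y(B) - Y(A)] / λ_min[Y(A) + M_u]²`,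
hence ε(a,b) is bounded by the maximum of the right-hand side over such A, B, u. -/
theorem E_optimality_epsilon_sharper_bound
    {E : Type*} [Fintype E] {p m : ℕ}
    (Rθ : Matrix (Fin p) (Fin p) ℝ) (hRθ : Rθ.PosDef)
    (M : E → Matrix (Fin p) (Fin p) ℝ) (hM : ∀ e, (M e).PosSemidef)
    (H : Matrix (Fin m) (Fin p) ℝ)
    (Y : Multiset E → Matrix (Fin p) (Fin p) ℝ)
    (hY : ∀ D : Multiset E, Y D = Rθ⁻¹ + (D.map M).sum)
    (f : Multiset E → ℝ)
    (hf : ∀ D : Multiset E, f D = lmax (H * (Y D)⁻¹ * Hᵀ)) :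
    ∀ (S T : Multiset E) (u : E), S ≤ T →
      f T - f (u ::ₘ T) - f S + f (u ::ₘ S) ≤
        lmax (H * Hᵀ) * lmax (Y T - Y S) / (lmin (Y S + M u)) ^ 2 := by
  intro S T u hST
  have hYpos : ∀ D : Multiset E, (Y D).PosDef := fun D => by
    rw [hY]; exact hRθ.inv.add_posSemidef (sum_map_psd M hM D)
  have hΔ : (Y T - Y S).PosSemidef := by
    obtain ⟨R, hR⟩ := Multiset.le_iff_exists_add.mp hST
    have h : Y T - Y S = (R.map M).sum := by
      rw [hY, hY, hR, Multiset.map_add, Multiset.sum_add]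
      abel
    rw [h]; exact sum_map_psd M hM _
  have hAeq : Y (u ::ₘ S) = Y S + M u := by
    rw [hY (u ::ₘ S), hY S, Multiset.map_cons, Multiset.sum_cons]; abel
  have hBeq : Y (u ::ₘ T) = (Y S + M u) + (Y T - Y S) := by
    rw [hY (u ::ₘ T), hY T, hY S, Multiset.map_cons, Multiset.sum_cons]; abel
  rcases Nat.eq_zero_or_pos p with hp | hp
  · subst hp
    have hzero : ∀ X : Matrix (Fin 0) (Fin 0) ℝ, H * X * Hᵀ = 0 := fun X => by
      ext i j; simp [Matrix.mul_apply]
    have hlm0 : ∀ X : Matrix (Fin 0) (Fin 0) ℝ, lmax X = 0 := lmax_fin_zero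
    have hfc : ∀ D, f D = lmax (0 : Matrix (Fin m) (Fin m) ℝ) := fun D => by
      rw [hf, hzero]
    rw [hfc T, hfc (u ::ₘ T), hfc S, hfc (u ::ₘ S), hlm0 (Y T - Y S)]
    simp
  rcases Nat.eq_zero_or_pos m with hm | hm
  · subst hm
    have hfc : ∀ D, f D = 0 := fun D => by rw [hf, lmax_fin_zero]
    rw [hfc T, hfc (u ::ₘ T), hfc S, hfc (u ::ₘ S), lmax_fin_zero (H * Hᵀ)]
    simp
  set A := Y S + M u with hAdef
  set Δ := Y T - Y S with hΔdef
  have hApd : A.PosDef := (hYpos S).add_posSemidef (hM u)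
  have hBpd : (A + Δ).PosDef := hApd.add_posSemidef hΔ
  have hc : 0 < lmin A := lmin_pos hp hApd
  have hHHT : (H * Hᵀ).PosSemidef := by
    have := Matrix.posSemidef_self_mul_conjTranspose H
    rwa [conjT] at this
  have hlmΔ : 0 ≤ lmax Δ := lmax_nonneg hΔ
  have hlmH : 0 ≤ lmax (H * Hᵀ) := lmax_nonneg hHHT
  have hYTS : Y T = Y S + Δ := by rw [hΔdef]; abel
  have hmono : f T ≤ f S := by
    rw [hf T, hf S]
    refine lmax_mono (herm_HXHT H (hYpos T).isHermitian.inv)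
      (herm_HXHT H (hYpos S).isHermitian.inv) fun x => ?_
    rw [quad_HXHT, quad_HXHT]
    have h := inv_antitone_quad (hYpos S) hΔ (Hᵀ *ᵥ x)
    rwa [← hYTS] at h
  have hmain : f (u ::ₘ S) - f (u ::ₘ T) ≤ lmax (H * Hᵀ) * lmax Δ / (lmin A) ^ 2 := by
    rw [hf (u ::ₘ S), hf (u ::ₘ T), hAeq, hBeq]
    have hsub := lmax_sub_le hm (herm_HXHT H hApd.isHermitian.inv)
      (herm_HXHT H hBpd.isHermitian.inv)
    refine le_trans hsub ?_
    have heq : H * A⁻¹ * Hᵀ - H * (A + Δ)⁻¹ * Hᵀ = H * (A⁻¹ - (A + Δ)⁻¹) * Hᵀ := by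
      rw [Matrix.mul_sub, Matrix.sub_mul]
    rw [heq]
    refine lmax_le_of_quad hm (herm_HXHT H (hApd.isHermitian.inv.sub hBpd.isHermitian.inv))
      fun x hx => ?_
    rw [quad_HXHT]
    set w := Hᵀ *ᵥ x with hwdef
    have e1 : w ⬝ᵥ (A⁻¹ - (A + Δ)⁻¹) *ᵥ w = w ⬝ᵥ A⁻¹ *ᵥ w - w ⬝ᵥ (A + Δ)⁻¹ *ᵥ w := by
      rw [Matrix.sub_mulVec, dotProduct_sub]
    have e2 := diff_quad_bound hApd hΔ w
    have e3 := quad_le_lmax hΔ.isHermitian (A⁻¹ *ᵥ w)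
    have e4 := inv_norm_bound hApd hc w
    have e5 : w ⬝ᵥ w ≤ lmax (H * Hᵀ) := by
      have h := quad_le_lmax hHHT.isHermitian x
      rw [hx, mul_one] at h
      have h2 : x ⬝ᵥ (H * Hᵀ) *ᵥ x = w ⬝ᵥ w := by
        have h3 := quad_HXHT H 1 x
        rw [Matrix.mul_one, Matrix.one_mulVec] at h3
        rw [h3]
      rwa [h2] at h
    have t1 : (A⁻¹ *ᵥ w) ⬝ᵥ Δ *ᵥ (A⁻¹ *ᵥ w) ≤ lmax Δ * ((w ⬝ᵥ w) / lmin A ^ 2) :=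
      le_trans e3 (mul_le_mul_of_nonneg_left e4 hlmΔ)
    have t2 : lmax Δ * ((w ⬝ᵥ w) / lmin A ^ 2) ≤ lmax Δ * (lmax (H * Hᵀ) / lmin A ^ 2) := by
      have hpos : (0:ℝ) < lmin A ^ 2 := by positivity
      exact mul_le_mul_of_nonneg_left (by gcongr) hlmΔ
    have t3 : lmax Δ * (lmax (H * Hᵀ) / lmin A ^ 2) = lmax (H * Hᵀ) * lmax Δ / lmin A ^ 2 := by
      ring
    linarith
  linarith
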